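/- Let A and B be finite-outcome measurements on a state space S that are α-intersubjective and β-intersubjective respectively. Then any joint measurement C of A and B is (α+β−1)-intersubjective. -/

import Mathlib

open Finset

/-- An effect on the state space `S`: an affine map taking values in `[0,1]` on `S`. -/
def IsEffect {V : Type*} [AddCommGroup V] [Module ℝ V] (S : Set V) (a : V →ᵃ[ℝ] ℝ) : Prop :=
  ∀ s ∈ S, 0 ≤ a s ∧ a s ≤ 1

/-- A finite-outcome measurement: a family of effects summing to the unit effect on `S`. -/
def IsMeasurement {V : Type*} [AddCommGroup V] [Module ℝ V] (S : Set V) {X : Type*} [Fintype X]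
    (A : X → (V →ᵃ[ℝ] ℝ)) : Prop :=
  (∀ x, IsEffect S (A x)) ∧ ∀ s ∈ S, ∑ x, A x s = 1

/-- A joint measurement of `A` and `B`: a measurement on `X × Y` whose marginals are `A`, `B`. -/
def IsJointMeasurement {V : Type*} [AddCommGroup V] [Module ℝ V] (S : Set V)
    {X Y : Type*} [Fintype X] [Fintype Y]
    (A : X → (V →ᵃ[ℝ] ℝ)) (B : Y → (V →ᵃ[ℝ] ℝ)) (C : X × Y → (V →ᵃ[ℝ] ℝ)) : Prop :=
  IsMeasurement S C ∧ (∀ x, ∀ s ∈ S, ∑ y, C (x, y) s = A x s) ∧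
    (∀ y, ∀ s ∈ S, ∑ x, C (x, y) s = B y s)

/-- `A` is `α`-intersubjective: every joint measurement of `A` with itself has diagonal
weight at least `α · 1_S`. -/
def Intersubjective {V : Type*} [AddCommGroup V] [Module ℝ V] (S : Set V) {X : Type*} [Fintype X]
    (α : ℝ) (A : X → (V →ᵃ[ℝ] ℝ)) : Prop :=
  ∀ C : X × X → (V →ᵃ[ℝ] ℝ), IsJointMeasurement S A A C → ∀ s ∈ S, α ≤ ∑ x, C (x, x) s

/-- `A` is `α`-sharp: for distinct outcomes `x ≠ x'`, any effect below both `A x` and `A x'`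
is below `(1 - α) · 1_S`. -/
def SharpMeasurement {V : Type*} [AddCommGroup V] [Module ℝ V] (S : Set V) {X : Type*} [Fintype X]
    (α : ℝ) (A : X → (V →ᵃ[ℝ] ℝ)) : Prop :=
  ∀ x x', x ≠ x' → ∀ b : V →ᵃ[ℝ] ℝ, IsEffect S b → (∀ s ∈ S, b s ≤ A x s) →
    (∀ s ∈ S, b s ≤ A x' s) → ∀ s ∈ S, b s ≤ 1 - α


lemma affineMap_sum_apply {V : Type*} [AddCommGroup V] [Module ℝ V] {X : Type*} (t : Finset X)
    (f : X → (V →ᵃ[ℝ] ℝ)) (s : V) : (∑ x ∈ t, f x) s = ∑ x ∈ t, f x s := by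
  classical
  induction t using Finset.induction with
  | empty => simp
  | insert a t h ih =>
      rw [Finset.sum_insert h, Finset.sum_insert h, AffineMap.coe_add, Pi.add_apply, ih]

set_option maxHeartbeats 1600000

/-- a joint measurement of an `α`-intersubjective measurement and a
`β`-intersubjective measurement is `(α + β - 1)`-intersubjective. -/
theorem joint_intersubjective {V : Type*} [NormedAddCommGroup V] [NormedSpace ℝ V]
    (S : Set V) (hSconv : Convex ℝ S) (hScomp : IsCompact S)
    {X Y : Type*} [Fintype X] [Fintype Y]
    (A : X → (V →ᵃ[ℝ] ℝ)) (B : Y → (V →ᵃ[ℝ] ℝ))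
    (hA : IsMeasurement S A) (hB : IsMeasurement S B) (α β : ℝ)
    (hAIS : Intersubjective S α A) (hBIS : Intersubjective S β B)
    (C : X × Y → (V →ᵃ[ℝ] ℝ)) (hC : IsJointMeasurement S A B C) :
    Intersubjective S (α + β - 1) C := by
  rintro D hD s hs
  classical
  obtain ⟨⟨hDeff, hDsum⟩, hD1, hD2⟩ := hD
  obtain ⟨⟨hCeff, hCsum⟩, hC1, hC2⟩ := hC
  set f : (X × Y) × (X × Y) → V → ℝ := fun w t => D w t with hf
  -- joint measurement of A with A
  set E : X × X → (V →ᵃ[ℝ] ℝ) := fun p => ∑ y : Y, ∑ y' : Y, D ((p.1, y), (p.2, y')) with hE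
  have hEapp : ∀ p : X × X, ∀ t : V, E p t = ∑ y : Y, ∑ y' : Y, f ((p.1, y), (p.2, y')) t := by
    intro p t
    rw [hE]
    rw [affineMap_sum_apply]
    exact Finset.sum_congr rfl fun y _ => affineMap_sum_apply _ _ _
  set F : Y × Y → (V →ᵃ[ℝ] ℝ) := fun p => ∑ x : X, ∑ x' : X, D ((x, p.1), (x', p.2)) with hF
  have hFapp : ∀ p : Y × Y, ∀ t : V, F p t = ∑ x : X, ∑ x' : X, f ((x, p.1), (x', p.2)) t := by
    intro p t
    rw [hF]
    rw [affineMap_sum_apply]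
    exact Finset.sum_congr rfl fun x _ => affineMap_sum_apply _ _ _
  have hfnn : ∀ w, ∀ t ∈ S, 0 ≤ f w t := fun w t ht => (hDeff w t ht).1
  have hEtot : ∀ t ∈ S, ∑ p : X × X, E p t = 1 := by
    intro t ht
    rw [Fintype.sum_prod_type]
    simp only [hEapp]
    calc ∑ x : X, ∑ x' : X, ∑ y : Y, ∑ y' : Y, f ((x, y), (x', y')) t
        = ∑ x : X, ∑ y : Y, ∑ w : X × Y, f ((x, y), w) t := by
          refine Finset.sum_congr rfl fun x _ => ?_
          rw [Finset.sum_comm]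
          exact Finset.sum_congr rfl fun y _ => (Fintype.sum_prod_type fun w : X × Y => f ((x, y), w) t).symm
      _ = ∑ x : X, ∑ y : Y, C (x, y) t :=
          Finset.sum_congr rfl fun x _ => Finset.sum_congr rfl fun y _ => hD1 (x, y) t ht
      _ = ∑ z : X × Y, C z t := (Fintype.sum_prod_type fun z : X × Y => C z t).symm
      _ = 1 := hCsum t ht
  have hEmarg1 : ∀ x : X, ∀ t ∈ S, ∑ x' : X, E (x, x') t = A x t := by
    intro x t ht
    simp only [hEapp]
    calc ∑ x' : X, ∑ y : Y, ∑ y' : Y, f ((x, y), (x', y')) t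
        = ∑ y : Y, ∑ w : X × Y, f ((x, y), w) t := by
          rw [Finset.sum_comm]
          exact Finset.sum_congr rfl fun y _ => (Fintype.sum_prod_type fun w : X × Y => f ((x, y), w) t).symm
      _ = ∑ y : Y, C (x, y) t := Finset.sum_congr rfl fun y _ => hD1 (x, y) t ht
      _ = A x t := hC1 x t ht
  have hEmarg2 : ∀ x' : X, ∀ t ∈ S, ∑ x : X, E (x, x') t = A x' t := by
    intro x' t ht
    simp only [hEapp]
    calc ∑ x : X, ∑ y : Y, ∑ y' : Y, f ((x, y), (x', y')) t
        = ∑ y' : Y, ∑ w : X × Y, f (w, (x', y')) t := by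
          rw [show (∑ x : X, ∑ y : Y, ∑ y' : Y, f ((x, y), (x', y')) t)
              = ∑ x : X, ∑ y' : Y, ∑ y : Y, f ((x, y), (x', y')) t from
            Finset.sum_congr rfl fun x _ => Finset.sum_comm]
          rw [Finset.sum_comm]
          exact Finset.sum_congr rfl fun y' _ => (Fintype.sum_prod_type fun w : X × Y => f (w, (x', y')) t).symm
      _ = ∑ y' : Y, C (x', y') t := Finset.sum_congr rfl fun y' _ => hD2 (x', y') t ht
      _ = A x' t := hC1 x' t ht
  have hEeff : ∀ p, IsEffect S (E p) := by
    intro p t ht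
    have hnn : ∀ q : X × X, 0 ≤ E q t := by
      intro q
      rw [hEapp]
      exact Finset.sum_nonneg fun y _ => Finset.sum_nonneg fun y' _ => hfnn _ t ht
    refine ⟨hnn p, ?_⟩
    have h1 : E p t ≤ ∑ q : X × X, E q t :=
      Finset.single_le_sum (fun q _ => hnn q) (Finset.mem_univ p)
    rwa [hEtot t ht] at h1
  have hEjoint : IsJointMeasurement S A A E := ⟨⟨hEeff, hEtot⟩, hEmarg1, hEmarg2⟩
  -- joint measurement of B with B
  have hFtot : ∀ t ∈ S, ∑ p : Y × Y, F p t = 1 := by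
    intro t ht
    rw [Fintype.sum_prod_type]
    simp only [hFapp]
    calc ∑ y : Y, ∑ y' : Y, ∑ x : X, ∑ x' : X, f ((x, y), (x', y')) t
        = ∑ x : X, ∑ y : Y, ∑ w : X × Y, f ((x, y), w) t := by
          rw [show (∑ y : Y, ∑ y' : Y, ∑ x : X, ∑ x' : X, f ((x, y), (x', y')) t)
              = ∑ y : Y, ∑ x : X, ∑ y' : Y, ∑ x' : X, f ((x, y), (x', y')) t from
            Finset.sum_congr rfl fun y _ => Finset.sum_comm]
          rw [Finset.sum_comm]
          refine Finset.sum_congr rfl fun x _ => Finset.sum_congr rfl fun y _ => ?_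
          rw [Finset.sum_comm]
          exact (Fintype.sum_prod_type fun w : X × Y => f ((x, y), w) t).symm
      _ = ∑ x : X, ∑ y : Y, C (x, y) t :=
          Finset.sum_congr rfl fun x _ => Finset.sum_congr rfl fun y _ => hD1 (x, y) t ht
      _ = ∑ z : X × Y, C z t := (Fintype.sum_prod_type fun z : X × Y => C z t).symm
      _ = 1 := hCsum t ht
  have hFmarg1 : ∀ y : Y, ∀ t ∈ S, ∑ y' : Y, F (y, y') t = B y t := by
    intro y t ht
    simp only [hFapp]
    calc ∑ y' : Y, ∑ x : X, ∑ x' : X, f ((x, y), (x', y')) t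
        = ∑ x : X, ∑ w : X × Y, f ((x, y), w) t := by
          rw [Finset.sum_comm]
          refine Finset.sum_congr rfl fun x _ => ?_
          rw [Finset.sum_comm]
          exact (Fintype.sum_prod_type fun w : X × Y => f ((x, y), w) t).symm
      _ = ∑ x : X, C (x, y) t := Finset.sum_congr rfl fun x _ => hD1 (x, y) t ht
      _ = B y t := hC2 y t ht
  have hFmarg2 : ∀ y' : Y, ∀ t ∈ S, ∑ y : Y, F (y, y') t = B y' t := by
    intro y' t ht
    simp only [hFapp]
    calc ∑ y : Y, ∑ x : X, ∑ x' : X, f ((x, y), (x', y')) t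
        = ∑ x' : X, ∑ w : X × Y, f (w, (x', y')) t := by
          rw [show (∑ y : Y, ∑ x : X, ∑ x' : X, f ((x, y), (x', y')) t)
              = ∑ y : Y, ∑ x' : X, ∑ x : X, f ((x, y), (x', y')) t from
            Finset.sum_congr rfl fun y _ => Finset.sum_comm]
          rw [Finset.sum_comm]
          refine Finset.sum_congr rfl fun x' _ => ?_
          rw [Finset.sum_comm]
          exact (Fintype.sum_prod_type fun w : X × Y => f (w, (x', y')) t).symm
      _ = ∑ x' : X, C (x', y') t := Finset.sum_congr rfl fun x' _ => hD2 (x', y') t ht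
      _ = B y' t := hC2 y' t ht
  have hFeff : ∀ p, IsEffect S (F p) := by
    intro p t ht
    have hnn : ∀ q : Y × Y, 0 ≤ F q t := by
      intro q
      rw [hFapp]
      exact Finset.sum_nonneg fun x _ => Finset.sum_nonneg fun x' _ => hfnn _ t ht
    refine ⟨hnn p, ?_⟩
    have h1 : F p t ≤ ∑ q : Y × Y, F q t :=
      Finset.single_le_sum (fun q _ => hnn q) (Finset.mem_univ p)
    rwa [hFtot t ht] at h1
  have hFjoint : IsJointMeasurement S B B F := ⟨⟨hFeff, hFtot⟩, hFmarg1, hFmarg2⟩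
  -- the key sums over filtered sets
  set P : Finset ((X × Y) × (X × Y)) := Finset.univ.filter (fun w => w.1.1 = w.2.1) with hPdef
  set Q : Finset ((X × Y) × (X × Y)) := Finset.univ.filter (fun w => w.1.2 = w.2.2) with hQdef
  have hPsum : ∑ w ∈ P, f w s = ∑ x : X, E (x, x) s := by
    rw [hPdef, Finset.sum_filter]
    simp only [hEapp, Fintype.sum_prod_type]
    refine Finset.sum_congr rfl fun x _ => Finset.sum_congr rfl fun y _ => ?_
    rw [Finset.sum_comm]
    refine Finset.sum_congr rfl fun y' _ => ?_
    simp
  have hQsum : ∑ w ∈ Q, f w s = ∑ y : Y, F (y, y) s := by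
    rw [hQdef, Finset.sum_filter]
    simp only [hFapp, Fintype.sum_prod_type]
    rw [Finset.sum_comm]
    refine Finset.sum_congr rfl fun y _ => Finset.sum_congr rfl fun x _ =>
      Finset.sum_congr rfl fun x' _ => ?_
    simp
  have hPQ : P ∩ Q = Finset.univ.filter (fun w : (X × Y) × (X × Y) => w.1 = w.2) := by
    rw [hPdef, hQdef]
    ext w
    simp [Prod.ext_iff, and_comm]
  have hdiag : ∑ w ∈ P ∩ Q, f w s = ∑ z : X × Y, D (z, z) s := by
    rw [hPQ, Finset.sum_filter]
    simp only [Fintype.sum_prod_type]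
    refine Finset.sum_congr rfl fun x _ => Finset.sum_congr rfl fun y _ => ?_
    simp [hf, Prod.ext_iff, ite_and]
  have hunion : ∑ w ∈ P ∪ Q, f w s ≤ 1 := by
    rw [← hDsum s hs]
    exact Finset.sum_le_sum_of_subset_of_nonneg (Finset.subset_univ _)
      (fun w _ _ => hfnn w s hs)
  have hincl : ∑ w ∈ P ∪ Q, f w s + ∑ w ∈ P ∩ Q, f w s = ∑ w ∈ P, f w s + ∑ w ∈ Q, f w s :=
    Finset.sum_union_inter
  have hα : α ≤ ∑ w ∈ P, f w s := by rw [hPsum]; exact hAIS E hEjoint s hs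
  have hβ : β ≤ ∑ w ∈ Q, f w s := by rw [hQsum]; exact hBIS F hFjoint s hs
  have : α + β - 1 ≤ ∑ w ∈ P ∩ Q, f w s := by linarith
  rwa [hdiag] at this
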